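/- Let F be a finite group, N a normal subgroup of F of order coprime to a prime p, and let P and U be two p-subgroups of F. Then P and U are conjugate in F if and only if their images PN/N and UN/N are conjugate in F/N. -/

import Mathlib

open Subgroup Pointwise

private lemma map_conj_comm_quot {F : Type*} [Group F] (N : Subgroup F) [N.Normal]
    (P : Subgroup F) (g : F) :
    (P.map (MulAut.conj g).toMonoidHom).map (QuotientGroup.mk' N)
      = (P.map (QuotientGroup.mk' N)).map (MulAut.conj (QuotientGroup.mk' N g)).toMonoidHom := by
  rw [Subgroup.map_map, Subgroup.map_map]
  rfl

/-- Let `F` be a finite group, `N ⊴ F` of order coprime to a prime `p`, and `P`, `U` two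
`p`-subgroups of `F`. Then `P` and `U` are conjugate in `F` if and only if their images
`PN/N` and `UN/N` are conjugate in `F⧸N`. -/
theorem conj_iff_map_quotient_conj_of_coprime {F : Type*} [Group F] [Finite F]
    (p : ℕ) [Fact p.Prime] (N : Subgroup F) [N.Normal] (P U : Subgroup F)
    (hP : IsPGroup p P) (hU : IsPGroup p U) (hcop : Nat.Coprime (Nat.card N) p) :
    (∃ g : F, P.map (MulAut.conj g).toMonoidHom = U) ↔
      (∃ q : F ⧸ N, (P.map (QuotientGroup.mk' N)).map (MulAut.conj q).toMonoidHom
        = U.map (QuotientGroup.mk' N)) := by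
  constructor
  · rintro ⟨g, rfl⟩
    exact ⟨QuotientGroup.mk' N g, (map_conj_comm_quot N P g).symm⟩
  · rintro ⟨q, hq⟩
    obtain ⟨g, rfl⟩ := QuotientGroup.mk'_surjective N q
    set P' := P.map (MulAut.conj g).toMonoidHom with hP'def
    have hP' : IsPGroup p P' := hP.map _
    -- images in the quotient agree
    have hPU : P'.map (QuotientGroup.mk' N) = U.map (QuotientGroup.mk' N) := by
      rw [hP'def, map_conj_comm_quot N P g, hq]
    -- hence P' ⊔ N = U ⊔ N
    have hsup : P' ⊔ N = U ⊔ N := by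
      have := congrArg (Subgroup.comap (QuotientGroup.mk' N)) hPU
      rwa [Subgroup.comap_map_eq, Subgroup.comap_map_eq, QuotientGroup.ker_mk'] at this
    set K : Subgroup F := U ⊔ N with hKdef
    have hP'K : P' ≤ K := hsup ▸ le_sup_left
    have hUK : U ≤ K := le_sup_left
    -- a p-subgroup meets N trivially
    have hdisj : ∀ (A : Subgroup F), IsPGroup p A → Disjoint A N := by
      intro A hA
      obtain ⟨n, hn⟩ := IsPGroup.iff_card.mp hA
      have h1 : Nat.card (A ⊓ N : Subgroup F) ∣ p ^ n :=
        hn ▸ Subgroup.card_dvd_of_le inf_le_left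
      have h2 : Nat.card (A ⊓ N : Subgroup F) ∣ Nat.card N :=
        Subgroup.card_dvd_of_le inf_le_right
      have hco : Nat.Coprime (Nat.card N) (p ^ n) := hcop.pow_right n
      have : Nat.card (A ⊓ N : Subgroup F) = 1 :=
        Nat.dvd_one.mp (hco ▸ Nat.dvd_gcd h2 h1)
      exact disjoint_iff.mpr (Subgroup.card_eq_one.mp this)
    -- the index of each of our p-subgroups in K is Nat.card N
    have hindex : ∀ (A : Subgroup F), IsPGroup p A → A ⊔ N = K →
        (A.subgroupOf K).index = Nat.card N := by
      intro A hA hAK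
      have hAle : A ≤ K := hAK ▸ le_sup_left
      have hNle : N ≤ K := hAK ▸ le_sup_right
      -- card K = card N * card A
      have hrel : N.relIndex K = Nat.card A := by
        rw [← hAK, sup_comm, Subgroup.relIndex_sup_left, Subgroup.relIndex,
          Subgroup.subgroupOf_eq_bot.mpr ((hdisj A hA).symm), Subgroup.index_bot]
      have hcardN : Nat.card (N.subgroupOf K) = Nat.card N :=
        Nat.card_congr (Subgroup.subgroupOfEquivOfLe hNle).toEquiv
      have hcardK : Nat.card K = Nat.card N * Nat.card A := by
        rw [← Subgroup.card_mul_index (N.subgroupOf K), hcardN,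
          show (N.subgroupOf K).index = N.relIndex K from rfl, hrel]
      have hcardA : Nat.card (A.subgroupOf K) = Nat.card A :=
        Nat.card_congr (Subgroup.subgroupOfEquivOfLe hAle).toEquiv
      have hmul : Nat.card A * (A.subgroupOf K).index = Nat.card N * Nat.card A := by
        rw [← hcardA, Subgroup.card_mul_index (A.subgroupOf K), hcardK, hcardA]
      have hpos : 0 < Nat.card A := Nat.card_pos
      exact Nat.eq_of_mul_eq_mul_left hpos (by rw [hmul, mul_comm])
    have hnd : ¬ p ∣ Nat.card N := by
      intro hdvd
      have : p ∣ 1 := hcop ▸ Nat.dvd_gcd hdvd dvd_rfl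
      exact (Fact.out : p.Prime).one_lt.ne' (Nat.dvd_one.mp this)
    -- both are Sylow p-subgroups of K
    have hPs : IsPGroup p (P'.subgroupOf K) :=
      hP'.of_equiv (Subgroup.subgroupOfEquivOfLe hP'K).symm
    have hUs : IsPGroup p (U.subgroupOf K) :=
      hU.of_equiv (Subgroup.subgroupOfEquivOfLe hUK).symm
    let S1 : Sylow p K := hPs.toSylow (by rw [hindex P' hP' hsup]; exact hnd)
    let S2 : Sylow p K := hUs.toSylow (by rw [hindex U hU rfl]; exact hnd)
    obtain ⟨k, hk⟩ := MulAction.exists_smul_eq K S1 S2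
    have hconj : (P'.subgroupOf K).map (MulAut.conj k).toMonoidHom = U.subgroupOf K := by
      have h2 : (S2 : Subgroup K) = U.subgroupOf K := IsPGroup.toSylow_coe _ _
      rw [← h2, ← hk]
      rfl
    -- transfer back to F
    have hfinal : P'.map (MulAut.conj (k : F)).toMonoidHom = U := by
      have hcomm : K.subtype.comp (MulAut.conj k).toMonoidHom
          = (MulAut.conj (k : F)).toMonoidHom.comp K.subtype := by
        ext x; rfl
      have := congrArg (Subgroup.map K.subtype) hconj
      rwa [Subgroup.map_map, hcomm, ← Subgroup.map_map, Subgroup.subgroupOf_map_subtype,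
        Subgroup.subgroupOf_map_subtype, inf_eq_left.mpr hP'K, inf_eq_left.mpr hUK] at this
    exact ⟨(k : F) * g, by
      rw [← hfinal, hP'def, Subgroup.map_map]
      congr 1
      ext x
      simp [mul_assoc]⟩
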